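/- Let G be a connected graph on [n], let S be a minimal cut of G (a minimal 2-cut), and let V_1, V_2 be the vertex sets of the two connected components of the induced subgraph on [n]\S. Let B ⊆ [n]\S be a subset with B ∩ V_1 ≠ ∅ and B ∩ V_2 ≠ ∅. Then B intersects every set S'\S, where S' ranges over all nice minimal k-cuts of G different from S, if and only if for each i = 1,2 the set B ∩ V_i is a connected dominating set of the induced subgraph G_{V_i ∪ S}. -/

import Mathlib

open MvPolynomial

variable {n : ℕ}

/-- Number of connected components of the subgraph of `G` induced on `T`. -/
noncomputable def numComp (G : SimpleGraph (Fin n)) (T : Set (Fin n)) : ℕ :=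
  Nat.card (G.induce T).ConnectedComponent

/-- `a` and `b` lie in the same connected component of the subgraph induced on `T`. -/
def SameComp (G : SimpleGraph (Fin n)) (T : Set (Fin n)) (a b : Fin n) : Prop :=
  ∃ (ha : a ∈ T) (hb : b ∈ T), (G.induce T).Reachable ⟨a, ha⟩ ⟨b, hb⟩

/-- `S` is a minimal `k`-cut of `G`. -/
def IsMinKCut (G : SimpleGraph (Fin n)) (S : Set (Fin n)) (k : ℕ) : Prop :=
  S.Nonempty ∧ S ≠ Set.univ ∧ numComp G Sᶜ = k ∧
    ∀ i ∈ S, numComp G (Sᶜ ∪ {i}) < numComp G Sᶜ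

/-- The collection `min(G)`: all minimal `k`-cuts (`k ≥ 2`) together with `∅`. -/
def minSet (G : SimpleGraph (Fin n)) : Set (Set (Fin n)) :=
  {S | S = ∅ ∨ ∃ k, 2 ≤ k ∧ IsMinKCut G S k}

/-- `A` is a connected dominating set of the subgraph of `G` induced on `T`. -/
def ConnDom (G : SimpleGraph (Fin n)) (T A : Set (Fin n)) : Prop :=
  A ⊆ T ∧ (G.induce A).Connected ∧ ∀ v ∈ T, v ∉ A → ∃ a ∈ A, G.Adj v a

/-- The polynomial ring `K[x_1,…,x_n,y_1,…,y_n]` over `ℂ`. -/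
abbrev PolyRing (n : ℕ) := MvPolynomial (Fin n ⊕ Fin n) ℂ

/-- The binomial `f_{i,j} = x_i y_j − x_j y_i`. -/
noncomputable def fij (i j : Fin n) : PolyRing n :=
  X (Sum.inl i) * X (Sum.inr j) - X (Sum.inl j) * X (Sum.inr i)

/-- The binomial edge ideal of a graph. -/
noncomputable def beIdeal (G : SimpleGraph (Fin n)) : Ideal (PolyRing n) :=
  Ideal.span {g | ∃ i j, G.Adj i j ∧ g = fij i j}

/-- Localized v-number of `I` at `p`. -/
noncomputable def vAt (I p : Ideal (PolyRing n)) : ℕ :=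
  sInf {d | ∃ f : PolyRing n, f.IsHomogeneous d ∧ Submodule.colon I (Ideal.span {f}) = p}

/-- v-number of `I`. -/
noncomputable def vNum (I : Ideal (PolyRing n)) : ℕ :=
  sInf {d | ∃ f : PolyRing n, f.IsHomogeneous d ∧ (Submodule.colon I (Ideal.span {f})).IsPrime}

/-- The graph which is the disjoint union of complete graphs on the connected
components of the subgraph of `G` induced on `Sᶜ`. -/
def tildeG (G : SimpleGraph (Fin n)) (S : Set (Fin n)) : SimpleGraph (Fin n) :=
  SimpleGraph.fromRel (fun a b => SameComp G Sᶜ a b)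

/-- The minimal prime `P_S` of the binomial edge ideal. -/
noncomputable def primePS (G : SimpleGraph (Fin n)) (S : Set (Fin n)) : Ideal (PolyRing n) :=
  Ideal.span (({g | ∃ i ∈ S, g = X (Sum.inl i)} ∪ {g | ∃ i ∈ S, g = X (Sum.inr i)} : Set (PolyRing n)))
    ⊔ beIdeal (tildeG G S)

/-- `B` is a dependent set of the rank-≤2 matroid `M(S)`. -/
def depM (G : SimpleGraph (Fin n)) (S : Set (Fin n)) (B : Set (Fin n)) : Prop :=
  (B ∩ S).Nonempty ∨ (∃ a b, a ∈ B ∧ b ∈ B ∧ a ≠ b ∧ SameComp G Sᶜ a b) ∨ 3 ≤ B.ncard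

/-- `A` is a transversal of `{D(M(S'))\D(M(S)) : S' ∈ min(G)\{S}}` consisting of
singletons and pairs outside `D(M(S))`. -/
def IsTransversal (G : SimpleGraph (Fin n)) (S : Set (Fin n))
    (A : Finset (Finset (Fin n))) : Prop :=
  (∀ e ∈ A, e.card = 1 ∨ e.card = 2) ∧ (∀ e ∈ A, ¬ depM G S ↑e) ∧
    ∀ S' ∈ minSet G, S' ≠ S → ∃ e ∈ A, depM G S' ↑e

/-- The singletons of `A`, viewed as a subset of `[n]`. -/
def A1set (A : Finset (Finset (Fin n))) : Finset (Fin n) :=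
  (A.filter fun e => e.card = 1).biUnion id

/-- The pairs of `A`. -/
def A2set (A : Finset (Finset (Fin n))) : Finset (Finset (Fin n)) :=
  A.filter fun e => e.card = 2

/-- The binomial attached to an unordered pair. -/
noncomputable def fPair (e : Finset (Fin n)) : PolyRing n :=
  if h : e.Nonempty then fij (e.min' h) (e.max' h) else 1

/-- The generator `g_{A,C,D}`. -/
noncomputable def gPoly (A : Finset (Finset (Fin n))) (C D : Finset (Fin n)) : PolyRing n :=
  (∏ k ∈ C, X (Sum.inl k)) * (∏ k ∈ D, X (Sum.inr k)) * ∏ e ∈ A2set A, fPair e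

/-- The cycle graph on `[n]`. -/
def cycG (n : ℕ) [NeZero n] : SimpleGraph (Fin n) :=
  SimpleGraph.fromRel (fun i j => j = i + 1)

/-- The connected domination number of `G`. -/
noncomputable def gammaC (G : SimpleGraph (Fin n)) : ℕ :=
  sInf {k | ∃ A : Set (Fin n), ConnDom G Set.univ A ∧ A.ncard = k}

/-- `S'` is nice with respect to the components `V1`, `V2`. -/
def Nice (G : SimpleGraph (Fin n)) (V1 V2 S' : Set (Fin n)) : Prop :=
  ¬ ∃ i j, i ∈ V1 \ S' ∧ j ∈ V2 \ S' ∧ SameComp G S'ᶜ i j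

/-- `V1`, `V2` are the vertex sets of the two connected components of the
subgraph induced on `Sᶜ`. -/
def ComponentsOf (G : SimpleGraph (Fin n)) (S V1 V2 : Set (Fin n)) : Prop :=
  V1 ∪ V2 = Sᶜ ∧ Disjoint V1 V2 ∧ V1.Nonempty ∧ V2.Nonempty ∧
    (∀ a ∈ V1, ∀ b ∈ V1, SameComp G Sᶜ a b) ∧
    (∀ a ∈ V2, ∀ b ∈ V2, SameComp G Sᶜ a b) ∧
    ∀ a ∈ V1, ∀ b ∈ V2, ¬ SameComp G Sᶜ a b

/-- Significance index of a variable: `x_1 > ⋯ > x_n > y_1 > ⋯ > y_n`. -/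
def sigIdx (n : ℕ) : Fin n ⊕ Fin n → ℕ := Sum.elim (fun i => (i : ℕ)) (fun i => n + i)

/-- Lexicographic comparison of exponent vectors. -/
def lexLt (n : ℕ) (a b : (Fin n ⊕ Fin n) →₀ ℕ) : Prop :=
  ∃ v, a v < b v ∧ ∀ w, sigIdx n w < sigIdx n v → a w = b w

/-- `m` is the leading (lex-largest) exponent of `f`. -/
def IsLeadExp (n : ℕ) (f : PolyRing n) (m : (Fin n ⊕ Fin n) →₀ ℕ) : Prop :=
  m ∈ f.support ∧ ∀ m' ∈ f.support, m' ≠ m → lexLt n m' m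

/-- The initial ideal of `I` with respect to the lexicographic order. -/
noncomputable def inIdeal (I : Ideal (PolyRing n)) : Ideal (PolyRing n) :=
  Ideal.span {g | ∃ f ∈ I, ∃ m, IsLeadExp n f m ∧ g = monomial m 1}

/-- A permutation `σ` of `[n]` is `S`-consistent (for `S` an independent set of
the cycle `C_n`). -/
def SConsistent (n : ℕ) [NeZero n] (S : Set (Fin n)) (σ : Equiv.Perm (Fin n)) : Prop :=
  (∀ x : Fin n, x ∉ S → x + 1 ∈ S →
    ((σ x < σ (x + 2) → x + 3 ∉ S → σ (x + 2) < σ (x + 3)) ∧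
     (σ x < σ (x + 2) → x - 1 ∉ S → σ (x - 1) < σ x) ∧
     (σ (x + 2) < σ x → x + 3 ∉ S → σ (x + 3) < σ (x + 2)) ∧
     (σ (x + 2) < σ x → x - 1 ∉ S → σ x < σ (x - 1)))) ∧
  (∀ y : Fin n, y - 1 ∉ S → y ∉ S → y + 1 ∉ S → (σ (y - 1) < σ y ↔ σ y < σ (y + 1)))

namespace StmtAux

open SimpleGraph

variable {n : ℕ} {G : SimpleGraph (Fin n)} {T U A S V1 V2 B : Set (Fin n)}
variable {a b c s i p q : Fin n}

/-- inclusion hom between induced subgraphs -/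
def inclHom (G : SimpleGraph (Fin n)) (h : T ⊆ U) : G.induce T →g G.induce U :=
  ⟨fun x => ⟨x.1, h x.2⟩, fun hab => hab⟩

lemma sc_refl (ha : a ∈ T) : SameComp G T a a := ⟨ha, ha, .refl _⟩

lemma sc_symm (h : SameComp G T a b) : SameComp G T b a := by
  obtain ⟨ha, hb, h⟩ := h; exact ⟨hb, ha, h.symm⟩

lemma sc_trans (h : SameComp G T a b) (h' : SameComp G T b c) : SameComp G T a c := by
  obtain ⟨ha, hb, h⟩ := h; obtain ⟨hb', hc, h'⟩ := h'
  exact ⟨ha, hc, h.trans h'⟩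

lemma sc_of_adj (ha : a ∈ T) (hb : b ∈ T) (hadj : G.Adj a b) : SameComp G T a b :=
  ⟨ha, hb, SimpleGraph.Adj.reachable (by exact hadj)⟩

lemma sc_mono (hTU : T ⊆ U) (h : SameComp G T a b) : SameComp G U a b := by
  obtain ⟨ha, hb, h⟩ := h
  exact ⟨hTU ha, hTU hb, h.map (inclHom G hTU)⟩

lemma walk_confine (hcl : ∀ x ∈ A, ∀ y ∈ T, G.Adj x y → y ∈ A) :
    ∀ {x y : ↥T} (_ : (G.induce T).Walk x y), ↑x ∈ A → ↑y ∈ A ∧ SameComp G A ↑x ↑y := by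
  intro x y w
  induction w with
  | nil => exact fun hx => ⟨hx, sc_refl hx⟩
  | cons h w ih =>
      rename_i u v _
      intro hu
      have hadj : G.Adj ↑u ↑v := h
      have hv : ↑v ∈ A := hcl _ hu _ v.2 hadj
      obtain ⟨hy, hr⟩ := ih hv
      exact ⟨hy, sc_trans (sc_of_adj hu hv hadj) hr⟩

lemma sc_confine (hcl : ∀ x ∈ A, ∀ y ∈ T, G.Adj x y → y ∈ A)
    (h : SameComp G T a b) (ha : a ∈ A) : b ∈ A ∧ SameComp G A a b := by
  obtain ⟨ha', hb', hr⟩ := h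
  obtain ⟨w⟩ := hr
  exact walk_confine hcl w ha

/-- decomposition of a walk in `T ∪ {s}` -/
lemma walk_decomp (hs : s ∉ T) {x y : ↥(T ∪ {s} : Set (Fin n))}
    (w : (G.induce (T ∪ {s})).Walk x y) (hy : ↑y ∈ T) :
    (↑x = s → ∃ z ∈ T, G.Adj s z ∧ SameComp G T z ↑y) ∧
      (↑x ∈ T → (SameComp G T ↑x ↑y ∨
        ((∃ z ∈ T, G.Adj z s ∧ SameComp G T ↑x z) ∧
         (∃ z ∈ T, G.Adj s z ∧ SameComp G T z ↑y)))) := by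
  induction w with
  | nil =>
      constructor
      · intro hx; exact absurd (hx ▸ hy) hs
      · intro hx; exact Or.inl (sc_refl hx)
  | cons h w ih =>
      rename_i x' u _
      have hadj : G.Adj ↑x' ↑u := h
      constructor
      · intro hx
        have hu : ↑u ∈ T := by
          rcases u.2 with h' | h'
          · exact h'
          · exfalso; rw [Set.mem_singleton_iff] at h'
            have hval : (↑x' : Fin n) = ↑u := hx.trans h'.symm
            exact (G.loopless.irrefl ↑u) (hval ▸ hadj)
        rcases (ih hy).2 hu with h' | ⟨_, h2⟩
        · refine ⟨↑u, hu, ?_, h'⟩; rw [hx] at hadj; exact hadj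
        · exact h2
      · intro hx
        rcases u.2 with hu | hu
        · rcases (ih hy).2 hu with h' | ⟨⟨z, hz, hzs, hsc⟩, h2⟩
          · exact Or.inl (sc_trans (sc_of_adj hx hu hadj) h')
          · exact Or.inr ⟨⟨z, hz, hzs, sc_trans (sc_of_adj hx hu hadj) hsc⟩, h2⟩
        · rw [Set.mem_singleton_iff] at hu
          obtain ⟨z, hz, hsz, hsc⟩ := (ih hy).1 hu
          refine Or.inr ⟨⟨↑x', hx, ?_, sc_refl hx⟩, ⟨z, hz, hsz, hsc⟩⟩
          rw [hu] at hadj; exact hadj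

lemma sc_union_singleton (hs : s ∉ T) (h : SameComp G (T ∪ {s}) a b) (ha : a ∈ T) (hb : b ∈ T) :
    SameComp G T a b ∨
      ((∃ z ∈ T, G.Adj z s ∧ SameComp G T a z) ∧
       (∃ z ∈ T, G.Adj s z ∧ SameComp G T z b)) := by
  obtain ⟨ha', hb', ⟨w⟩⟩ := h
  exact (walk_decomp hs w hb).2 ha

lemma numComp_lt (hi : i ∉ T) (ha : a ∈ T) (hb : b ∈ T)
    (hia : G.Adj i a) (hib : G.Adj i b) (hab : ¬ SameComp G T a b) :
    numComp G (T ∪ {i}) < numComp G T := by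
  classical
  have hsub : T ⊆ T ∪ {i} := Set.subset_union_left
  set f : (G.induce T).ConnectedComponent → (G.induce (T ∪ {i})).ConnectedComponent :=
    SimpleGraph.ConnectedComponent.map (inclHom G hsub) with hf
  have hmk : ∀ (x : ↥T), f ((G.induce T).connectedComponentMk x)
      = (G.induce (T ∪ {i})).connectedComponentMk ⟨↑x, hsub x.2⟩ := by
    intro x; rfl
  have hi' : (i : Fin n) ∈ T ∪ {i} := Or.inr rfl
  have hsurj : Function.Surjective f := by
    intro C
    induction C using SimpleGraph.ConnectedComponent.ind with
    | _ v =>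
      rcases v.2 with hv | hv
      · exact ⟨(G.induce T).connectedComponentMk ⟨↑v, hv⟩, by rw [hmk]⟩
      · refine ⟨(G.induce T).connectedComponentMk ⟨a, ha⟩, ?_⟩
        rw [hmk]
        apply SimpleGraph.ConnectedComponent.sound
        have : (G.induce (T ∪ {i})).Adj ⟨a, hsub ha⟩ v := by
          show G.Adj a ↑v
          rw [Set.mem_singleton_iff] at hv
          rw [hv]; exact hia.symm
        exact this.reachable
  have hninj : ¬ Function.Injective f := by
    intro hinj
    apply hab
    have h1 : f ((G.induce T).connectedComponentMk ⟨a, ha⟩)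
        = f ((G.induce T).connectedComponentMk ⟨b, hb⟩) := by
      rw [hmk, hmk]
      apply SimpleGraph.ConnectedComponent.sound
      have hA : (G.induce (T ∪ {i})).Adj ⟨a, hsub ha⟩ ⟨i, hi'⟩ := hia.symm
      have hB : (G.induce (T ∪ {i})).Adj ⟨i, hi'⟩ ⟨b, hsub hb⟩ := hib
      exact hA.reachable.trans hB.reachable
    have h2 := hinj h1
    have h3 := (SimpleGraph.ConnectedComponent.eq).mp h2
    exact ⟨ha, hb, h3⟩
  have fT : Fintype (G.induce T).ConnectedComponent := Fintype.ofFinite _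
  have fU : Fintype (G.induce (T ∪ {i})).ConnectedComponent := Fintype.ofFinite _
  show Nat.card _ < Nat.card _
  rw [Nat.card_eq_fintype_card, Nat.card_eq_fintype_card]
  exact Fintype.card_lt_of_surjective_not_injective f hsurj hninj

lemma numComp_le (hi : i ∉ T)
    (h : ∀ x y, x ∈ T → y ∈ T → G.Adj i x → G.Adj i y → SameComp G T x y) :
    numComp G T ≤ numComp G (T ∪ {i}) := by
  classical
  have hsub : T ⊆ T ∪ {i} := Set.subset_union_left
  set f : (G.induce T).ConnectedComponent → (G.induce (T ∪ {i})).ConnectedComponent :=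
    SimpleGraph.ConnectedComponent.map (inclHom G hsub) with hf
  have hinj : Function.Injective f := by
    intro C D hCD
    induction C using SimpleGraph.ConnectedComponent.ind with
    | _ x =>
    induction D using SimpleGraph.ConnectedComponent.ind with
    | _ y =>
    have hr : (G.induce (T ∪ {i})).Reachable ⟨↑x, hsub x.2⟩ ⟨↑y, hsub y.2⟩ :=
      (SimpleGraph.ConnectedComponent.eq).mp hCD
    have hsc : SameComp G (T ∪ {i}) ↑x ↑y := ⟨hsub x.2, hsub y.2, hr⟩
    have hd := sc_union_singleton hi hsc x.2 y.2
    apply SimpleGraph.ConnectedComponent.sound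
    rcases hd with h' | ⟨⟨z, hz, hzs, hxz⟩, ⟨z', hz', hsz', hzy⟩⟩
    · obtain ⟨_, _, hr'⟩ := h'
      convert hr'
    · have hzz : SameComp G T z z' := h z z' hz hz' hzs.symm hsz'
      have hfin : SameComp G T ↑x ↑y := sc_trans hxz (sc_trans hzz hzy)
      obtain ⟨_, _, hr'⟩ := hfin
      convert hr'
  exact Nat.card_le_card_of_injective f hinj

lemma two_le_numComp (ha : a ∈ T) (hb : b ∈ T) (hab : ¬ SameComp G T a b) :
    2 ≤ numComp G T := by
  classical
  have hne : (G.induce T).connectedComponentMk ⟨a, ha⟩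
      ≠ (G.induce T).connectedComponentMk ⟨b, hb⟩ := by
    intro h
    exact hab ⟨ha, hb, (SimpleGraph.ConnectedComponent.eq).mp h⟩
  have hnt : Nontrivial (G.induce T).ConnectedComponent := ⟨_, _, hne⟩
  have fT : Fintype (G.induce T).ConnectedComponent := Fintype.ofFinite _
  show 2 ≤ Nat.card _
  rw [Nat.card_eq_fintype_card]
  exact Fintype.one_lt_card_iff_nontrivial.mpr hnt

end StmtAux
namespace StmtAux

variable {n : ℕ} {G : SimpleGraph (Fin n)}

structure Ctx (G : SimpleGraph (Fin n)) (S V1 V2 B : Set (Fin n)) : Prop where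
  hG : G.Connected
  hcut : IsMinKCut G S 2
  hcomp : ComponentsOf G S V1 V2
  hB : B ⊆ V1 ∪ V2
  h1 : (B ∩ V1).Nonempty
  h2 : (B ∩ V2).Nonempty

namespace Ctx

variable {S V1 V2 B : Set (Fin n)} (hc : Ctx G S V1 V2 B)
include hc

lemma v1c : V1 ⊆ Sᶜ := by rw [← hc.hcomp.1]; exact Set.subset_union_left
lemma v2c : V2 ⊆ Sᶜ := by rw [← hc.hcomp.1]; exact Set.subset_union_right
lemma v1S : ∀ x ∈ V1, x ∉ S := fun x hx => hc.v1c hx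
lemma v2S : ∀ x ∈ V2, x ∉ S := fun x hx => hc.v2c hx
lemma v1v2 : ∀ x ∈ V1, x ∉ V2 := fun x hx h2 => Set.disjoint_left.mp hc.hcomp.2.1 hx h2
lemma BS : ∀ x ∈ B, x ∉ S := by
  intro x hx
  rcases hc.hB hx with h | h
  exacts [hc.v1S x h, hc.v2S x h]

lemma mem12 {x : Fin n} (hx : x ∈ Sᶜ) : x ∈ V1 ∨ x ∈ V2 := by
  have hx' : x ∈ V1 ∪ V2 := by rw [hc.hcomp.1]; exact hx
  exact hx'

lemma tri (x : Fin n) : x ∈ V1 ∨ x ∈ V2 ∨ x ∈ S := by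
  by_cases hx : x ∈ S
  · exact Or.inr (Or.inr hx)
  · rcases hc.mem12 hx with h | h
    exacts [Or.inl h, Or.inr (Or.inl h)]

/-- F1 : no edges between `V1` and `V2`. -/
lemma noedge : ∀ a ∈ V1, ∀ b ∈ V2, ¬ G.Adj a b := by
  intro a ha b hb hadj
  exact hc.hcomp.2.2.2.2.2.2 a ha b hb (sc_of_adj (hc.v1c ha) (hc.v2c hb) hadj)

/-- F2 : every vertex of `S` has neighbours in both `V1` and `V2`. -/
lemma s_adj_both : ∀ s ∈ S, (∃ a ∈ V1, G.Adj s a) ∧ (∃ b ∈ V2, G.Adj s b) := by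
  intro s hs
  have hlt := hc.hcut.2.2.2 s hs
  have hnot : ¬ ∀ x y, x ∈ Sᶜ → y ∈ Sᶜ → G.Adj s x → G.Adj s y → SameComp G Sᶜ x y := by
    intro hall
    exact absurd hlt (not_lt.mpr (numComp_le (fun h => h hs) hall))
  push_neg at hnot
  obtain ⟨x, y, hx, hy, hsx, hsy, hxy⟩ := hnot
  have hx' : x ∈ V1 ∨ x ∈ V2 := hc.mem12 hx
  have hy' : y ∈ V1 ∨ y ∈ V2 := hc.mem12 hy
  rcases hx' with hx1 | hx2 <;> rcases hy' with hy1 | hy2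
  · exact absurd (hc.hcomp.2.2.2.2.1 x hx1 y hy1) hxy
  · exact ⟨⟨x, hx1, hsx⟩, ⟨y, hy2, hsy⟩⟩
  · exact ⟨⟨y, hy1, hsy⟩, ⟨x, hx2, hsx⟩⟩
  · exact absurd (hc.hcomp.2.2.2.2.2.1 x hx2 y hy2) hxy

/-- vertices of `V2` are in the same component of any superset of `V2`. -/
lemma sc_v2 : ∀ a ∈ V2, ∀ b ∈ V2, SameComp G V2 a b := by
  intro a ha b hb
  have hsc := hc.hcomp.2.2.2.2.2.1 a ha b hb
  have hcl : ∀ x ∈ V2, ∀ y ∈ Sᶜ, G.Adj x y → y ∈ V2 := by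
    intro x hx y hy hadj
    rcases hc.mem12 hy with h | h
    · exact absurd hadj.symm (hc.noedge y h x hx)
    · exact h
  exact (sc_confine hcl hsc ha).2

lemma sc_v1' : ∀ a ∈ V1, ∀ b ∈ V1, SameComp G V1 a b := by
  intro a ha b hb
  have hsc := hc.hcomp.2.2.2.2.1 a ha b hb
  have hcl : ∀ x ∈ V1, ∀ y ∈ Sᶜ, G.Adj x y → y ∈ V1 := by
    intro x hx y hy hadj
    rcases hc.mem12 hy with h | h
    · exact h
    · exact absurd hadj (hc.noedge x hx y h)
  exact (sc_confine hcl hsc ha).2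

end Ctx

section Families

variable {S V1 V2 B A SG : Set (Fin n)} (hc : Ctx G S V1 V2 B)

/-- niceness-criterion state -/
structure GoodState (G : SimpleGraph (Fin n)) (S V1 : Set (Fin n)) (A SG : Set (Fin n)) : Prop where
  hA1 : A ⊆ V1
  hSG : SG ⊆ S
  hN : ∀ s ∈ S, s ∉ SG → ∀ w ∈ V1, G.Adj s w → w ∈ A

variable (hg : GoodState G S V1 A SG)
include hc hg

lemma v2_compl : V2 ⊆ (A ∪ SG)ᶜ := by
  intro x hx
  rintro (h | h)
  · exact hc.v1v2 x (hg.hA1 h) hx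
  · exact hc.v2S x hx (hg.hSG h)

/-- closure of `V1 ∩ (A∪SG)ᶜ` inside the complement -/
lemma v1_closed :
    ∀ x ∈ V1 ∩ (A ∪ SG)ᶜ, ∀ y ∈ (A ∪ SG)ᶜ, G.Adj x y → y ∈ V1 ∩ (A ∪ SG)ᶜ := by
  intro x hx y hy hadj
  rcases hc.tri y with h | h | h
  · exact ⟨h, hy⟩
  · exact absurd hadj (hc.noedge x hx.1 y h)
  · exfalso
    have hySG : y ∉ SG := fun hsg => hy (Or.inr hsg)
    have := hg.hN y h hySG x hx.1 hadj.symm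
    exact hx.2 (Or.inl this)

/-- confinement: vertices of `V1` in the complement cannot reach outside `V1`. -/
lemma conf_v1 {x y : Fin n} (hx1 : x ∈ V1) (hxc : x ∈ (A ∪ SG)ᶜ)
    (h : SameComp G (A ∪ SG)ᶜ x y) : y ∈ V1 := by
  exact (sc_confine (v1_closed hc hg) h ⟨hx1, hxc⟩).1.1

/-- the `Z`-side: all of `V2` and the free part of `S` lie in one component. -/
lemma zcomp {x y : Fin n} (hx : x ∈ (A ∪ SG)ᶜ) (hy : y ∈ (A ∪ SG)ᶜ)
    (hx2 : x ∈ V2 ∨ x ∈ S) (hy2 : y ∈ V2 ∨ y ∈ S) :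
    SameComp G (A ∪ SG)ᶜ x y := by
  obtain ⟨b0, hb0⟩ := hc.hcomp.2.2.2.1
  have hb0c : b0 ∈ (A ∪ SG)ᶜ := v2_compl hc hg hb0
  have key : ∀ z, z ∈ (A ∪ SG)ᶜ → (z ∈ V2 ∨ z ∈ S) → SameComp G (A ∪ SG)ᶜ z b0 := by
    intro z hz hz2
    rcases hz2 with h | h
    · exact sc_mono (v2_compl hc hg) (hc.sc_v2 z h b0 hb0)
    · obtain ⟨_, b, hbV2, hbadj⟩ := hc.s_adj_both z h
      have hbc : b ∈ (A ∪ SG)ᶜ := v2_compl hc hg hbV2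
      exact sc_trans (sc_of_adj hz hbc hbadj)
        (sc_mono (v2_compl hc hg) (hc.sc_v2 b hbV2 b0 hb0))
  exact sc_trans (key x hx hx2) (sc_symm (key y hy hy2))

/-- The terminal construction: a stable state yields a nice minimal cut avoiding `B`,
contradicting the transversal hypothesis. -/
lemma mkCutFalse
    (LHS : ∀ S' ∈ minSet G, S' ≠ S → Nice G V1 V2 S' → (B ∩ (S' \ S)).Nonempty)
    (hAB : ∀ x ∈ A, x ∉ B) (hAne : A.Nonempty)
    (hmin : ∀ u ∈ A ∪ SG, ∃ x y, x ∈ (A ∪ SG)ᶜ ∧ y ∈ (A ∪ SG)ᶜ ∧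
      G.Adj u x ∧ G.Adj u y ∧ ¬ SameComp G (A ∪ SG)ᶜ x y) : False := by
  classical
  set S'' := A ∪ SG with hS''
  obtain ⟨a0, ha0⟩ := hAne
  obtain ⟨x0, y0, hx0, hy0, _, _, hxy0⟩ := hmin a0 (Or.inl ha0)
  have hk2 : 2 ≤ numComp G S''ᶜ := two_le_numComp hx0 hy0 hxy0
  have hmincut : IsMinKCut G S'' (numComp G S''ᶜ) := by
    refine ⟨⟨a0, Or.inl ha0⟩, ?_, rfl, ?_⟩
    · intro h
      rw [h] at hx0
      exact hx0 (Set.mem_univ x0)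
    · intro u hu
      obtain ⟨x, y, hx, hy, hux, huy, hxy⟩ := hmin u hu
      exact numComp_lt (fun h => h hu) hx hy hux huy hxy
  have hne : S'' ≠ S := by
    intro h
    exact hc.v1S a0 (hg.hA1 ha0) (h ▸ (Or.inl ha0))
  have hnice : Nice G V1 V2 S'' := by
    rintro ⟨i, j, hi, hj, hsc⟩
    have hjV1 : j ∈ V1 := conf_v1 hc hg hi.1 hi.2 hsc
    exact hc.v1v2 j hjV1 hj.1
  obtain ⟨x, hxB, hxS'', hxS⟩ := LHS S'' (Or.inr ⟨_, hk2, hmincut⟩) hne hnice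
  rcases hxS'' with h | h
  · exact hAB x h hxB
  · exact hxS (hg.hSG h)

end Families

end StmtAux

namespace StmtAux

variable {n : ℕ} {G : SimpleGraph (Fin n)} {S V1 V2 B : Set (Fin n)}

section ML

variable (hc : Ctx G S V1 V2 B)
include hc

lemma mem_compl_of {A SG : Set (Fin n)} {x : Fin n} (h1 : x ∉ A) (h2 : x ∉ SG) :
    x ∈ (A ∪ SG)ᶜ := by rintro (h | h); exacts [h1 h, h2 h]

lemma v1_mem_compl {A SG : Set (Fin n)} {x : Fin n} (hg : GoodState G S V1 A SG)
    (hx : x ∈ V1) (hxA : x ∉ A) : x ∈ (A ∪ SG)ᶜ := by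
  rintro (h | h)
  exacts [hxA h, hc.v1S x hx (hg.hSG h)]

lemma s_mem_compl {A SG : Set (Fin n)} {x : Fin n} (hg : GoodState G S V1 A SG)
    (hx : x ∈ S) (hxSG : x ∉ SG) : x ∈ (A ∪ SG)ᶜ := by
  rintro (h | h)
  exacts [hc.v1S x (hg.hA1 h) hx, hxSG h]

lemma ML2stable {A SG : Set (Fin n)} (hg : GoodState G S V1 A SG)
    (LHS : ∀ S' ∈ minSet G, S' ≠ S → Nice G V1 V2 S' → (B ∩ (S' \ S)).Nonempty)
    {vg : Fin n} (hvg : vg ∈ S) (hvgSG : vg ∉ SG)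
    (hAsub : ∀ a ∈ A, G.Adj vg a) (hAne : A.Nonempty) (hAB : ∀ x ∈ A, x ∉ B)
    (hout : ∀ a ∈ A, ∃ w, w ∈ V1 ∧ w ∉ A ∧ G.Adj a w)
    (hstab : ∀ s ∈ SG, ∃ w, w ∈ V1 ∧ w ∉ A ∧ G.Adj s w) : False := by
  apply mkCutFalse hc hg LHS hAB hAne
  intro u hu
  rcases hu with huA | huSG
  · obtain ⟨w, hwV1, hwA, hadj⟩ := hout u huA
    have hwc : w ∈ (A ∪ SG)ᶜ := v1_mem_compl hc hg hwV1 hwA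
    have hvgc : vg ∈ (A ∪ SG)ᶜ := s_mem_compl hc hg hvg hvgSG
    refine ⟨w, vg, hwc, hvgc, hadj, (hAsub u huA).symm, ?_⟩
    intro hsc
    exact hc.v1S vg (conf_v1 hc hg hwV1 hwc hsc) hvg
  · obtain ⟨w, hwV1, hwA, hadj⟩ := hstab u huSG
    obtain ⟨_, b, hbV2, hbadj⟩ := hc.s_adj_both u (hg.hSG huSG)
    have hwc : w ∈ (A ∪ SG)ᶜ := v1_mem_compl hc hg hwV1 hwA
    have hbc : b ∈ (A ∪ SG)ᶜ := v2_compl hc hg hbV2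
    refine ⟨w, b, hwc, hbc, hadj, hbadj, ?_⟩
    intro hsc
    exact hc.v1v2 b (conf_v1 hc hg hwV1 hwc hsc) hbV2

lemma ML2aux
    (LHS : ∀ S' ∈ minSet G, S' ≠ S → Nice G V1 V2 S' → (B ∩ (S' \ S)).Nonempty)
    {vg : Fin n} (hvg : vg ∈ S) {A : Set (Fin n)} (hA1 : A ⊆ V1)
    (hAsub : ∀ a ∈ A, G.Adj vg a) (hAne : A.Nonempty) (hAB : ∀ x ∈ A, x ∉ B)
    (hout : ∀ a ∈ A, ∃ w, w ∈ V1 ∧ w ∉ A ∧ G.Adj a w) :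
    ∀ (m : ℕ) (SG : Set (Fin n)), SG.ncard ≤ m → SG ⊆ S → vg ∉ SG →
      (∀ s ∈ S, s ∉ SG → ∀ w ∈ V1, G.Adj s w → w ∈ A) → False := by
  intro m
  induction m with
  | zero =>
      intro SG hm hSGS hvgSG hN
      have hSGe : SG = ∅ := (Set.ncard_eq_zero).mp (Nat.le_zero.mp hm)
      apply ML2stable hc ⟨hA1, hSGS, hN⟩ LHS hvg hvgSG hAsub hAne hAB hout
      intro s hs
      rw [hSGe] at hs
      exact absurd hs (Set.notMem_empty s)
  | succ m ih =>
      intro SG hm hSGS hvgSG hN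
      by_cases hR1 : ∃ s ∈ SG, ∀ w ∈ V1, G.Adj s w → w ∈ A
      · obtain ⟨s, hsSG, hsprop⟩ := hR1
        refine ih (SG \ {s}) ?_ (Set.diff_subset.trans hSGS) (fun h => hvgSG h.1) ?_
        · have hlt := Set.ncard_diff_singleton_lt_of_mem hsSG (SG.toFinite)
          omega
        · intro s' hs' hs'n w hw hadj
          by_cases hss : s' = s
          · subst hss; exact hsprop w hw hadj
          · exact hN s' hs' (fun hin => hs'n ⟨hin, hss⟩) w hw hadj
      · push_neg at hR1
        apply ML2stable hc ⟨hA1, hSGS, hN⟩ LHS hvg hvgSG hAsub hAne hAB hout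
        intro s hs
        obtain ⟨w, hw, hadj, hwA⟩ := hR1 s hs
        exact ⟨w, hw, hwA, hadj⟩

lemma ML1aux
    (LHS : ∀ S' ∈ minSet G, S' ≠ S → Nice G V1 V2 S' → (B ∩ (S' \ S)).Nonempty)
    {p q : Fin n} (hp : p ∈ V1) (hq : q ∈ V1) :
    ∀ (m : ℕ) (A SG : Set (Fin n)), (n + 1) * A.ncard + SG.ncard ≤ m →
      A ⊆ V1 → (∀ x ∈ A, x ∉ B) → p ∉ A → q ∉ A → SG ⊆ S →
      (∀ s ∈ S, s ∉ SG → ∀ w ∈ V1, G.Adj s w → w ∈ A) →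
      ¬ SameComp G ((A ∪ SG)ᶜ) p q → False := by
  intro m
  induction m with
  | zero =>
      intro A SG hm hA1 hAB hpA hqA hSG hN hINV
      -- A must be empty, then SG = S and p, q are connected in Sᶜ
      have hA0 : A.ncard = 0 := by
        by_contra h
        have : 1 ≤ A.ncard := Nat.one_le_iff_ne_zero.mpr h
        have : n + 1 ≤ (n + 1) * A.ncard := Nat.le_mul_of_pos_right _ (by omega)
        omega
      have hAe : A = ∅ := (Set.ncard_eq_zero).mp hA0
      have hSGS : SG = S := by
        apply Set.Subset.antisymm hSG
        intro s hs
        by_contra hsn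
        obtain ⟨⟨a, haV1, hadj⟩, _⟩ := hc.s_adj_both s hs
        have := hN s hs hsn a haV1 hadj
        rw [hAe] at this
        exact absurd this (Set.notMem_empty a)
      apply hINV
      have hEq : (A ∪ SG)ᶜ = Sᶜ := by rw [hAe, hSGS, Set.empty_union]
      rw [hEq]
      exact hc.hcomp.2.2.2.2.1 p hp q hq
  | succ m ih =>
      intro A SG hm hA1 hAB hpA hqA hSG hN hINV
      by_cases hAe : A = ∅
      · -- same as the zero case : A empty
        have hSGS : SG = S := by
          apply Set.Subset.antisymm hSG
          intro s hs
          by_contra hsn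
          obtain ⟨⟨a, haV1, hadj⟩, _⟩ := hc.s_adj_both s hs
          have := hN s hs hsn a haV1 hadj
          rw [hAe] at this
          exact absurd this (Set.notMem_empty a)
        apply hINV
        have hEq : (A ∪ SG)ᶜ = Sᶜ := by rw [hAe, hSGS, Set.empty_union]
        rw [hEq]
        exact hc.hcomp.2.2.2.2.1 p hp q hq
      have hAne : A.Nonempty := Set.nonempty_iff_ne_empty.mpr hAe
      have hg : GoodState G S V1 A SG := ⟨hA1, hSG, hN⟩
      have hpc : p ∈ (A ∪ SG)ᶜ := v1_mem_compl hc hg hp hpA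
      have hqc : q ∈ (A ∪ SG)ᶜ := v1_mem_compl hc hg hq hqA
      by_cases hR1 : ∃ s ∈ SG, ∀ w ∈ V1, G.Adj s w → w ∈ A
      · obtain ⟨s, hsSG, hsprop⟩ := hR1
        have hsS : s ∈ S := hSG hsSG
        have hsA : s ∉ A := fun h => hc.v1S s (hA1 h) hsS
        refine ih A (SG \ {s}) ?_ hA1 hAB hpA hqA (Set.diff_subset.trans hSG) ?_ ?_
        · have hlt := Set.ncard_diff_singleton_lt_of_mem hsSG (SG.toFinite)
          omega
        · intro s' hs' hs'n w hw hadj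
          by_cases hss : s' = s
          · subst hss; exact hsprop w hw hadj
          · exact hN s' hs' (fun hin => hs'n ⟨hin, hss⟩) w hw hadj
        · intro hsc
          have hEq : ((A ∪ SG \ {s})ᶜ : Set (Fin n)) = (A ∪ SG)ᶜ ∪ {s} := by
            ext x
            simp only [Set.mem_compl_iff, Set.mem_union, Set.mem_diff,
              Set.mem_singleton_iff]
            constructor
            · intro h
              by_cases hxs : x = s
              · exact Or.inr hxs
              · exact Or.inl (fun hor => h (hor.imp id (fun hx => ⟨hx, hxs⟩)))
            · rintro (h | h)
              · intro hor
                exact h (hor.imp id (fun hx => hx.1))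
              · subst h
                rintro (hx | hx)
                exacts [hsA hx, hx.2 rfl]
          rw [hEq] at hsc
          have hs_not : s ∉ (A ∪ SG)ᶜ := fun h => h (Or.inr hsSG)
          rcases sc_union_singleton hs_not hsc hpc hqc with h | ⟨⟨x, hx, hxs, hpx⟩, ⟨y, hy, hsy, hyq⟩⟩
          · exact hINV h
          · have hxpos : x ∈ V2 ∨ x ∈ S := by
              rcases hc.tri x with h1 | h2 | h3
              · exact absurd (hsprop x h1 hxs.symm) (fun hA => hx (Or.inl hA))
              exacts [Or.inl h2, Or.inr h3]
            have hypos : y ∈ V2 ∨ y ∈ S := by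
              rcases hc.tri y with h1 | h2 | h3
              · exact absurd (hsprop y h1 hsy) (fun hA => hy (Or.inl hA))
              exacts [Or.inl h2, Or.inr h3]
            exact hINV (sc_trans hpx (sc_trans (zcomp hc hg hx hy hxpos hypos) hyq))
      by_cases hR3 : ∃ a ∈ A, ∀ w, G.Adj a w → w ∈ V1 → w ∈ A
      · obtain ⟨a, haA, haprop⟩ := hR3
        have haV1 : a ∈ V1 := hA1 haA
        set SG' : Set (Fin n) := SG ∪ {s | s ∈ S ∧ G.Adj s a} with hSG'def
        refine ih (A \ {a}) SG' ?_ (Set.diff_subset.trans hA1)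
          (fun x hx => hAB x hx.1) (fun h => hpA h.1) (fun h => hqA h.1)
          ?_ ?_ ?_
        · -- measure
          obtain ⟨K, hK⟩ : ∃ K, A.ncard = K + 1 := by
            have hpos : 0 < A.ncard := (Set.ncard_pos).mpr hAne
            exact ⟨A.ncard - 1, by omega⟩
          have hd : (A \ {a}).ncard = K := by
            have := Set.ncard_diff_singleton_of_mem haA
            omega
          have hSG'le : SG'.ncard ≤ n := by
            have h1 : SG'.ncard ≤ (Set.univ : Set (Fin n)).ncard :=
              Set.ncard_le_ncard (Set.subset_univ _) (Set.toFinite _)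
            have h2 : (Set.univ : Set (Fin n)).ncard = n := by
              rw [Set.ncard_univ, Nat.card_eq_fintype_card, Fintype.card_fin]
            omega
          have hmul : (n + 1) * A.ncard = (n + 1) * K + (n + 1) := by
            rw [hK, Nat.mul_succ]
          rw [hd]
          have := hm
          rw [hmul] at this
          omega
        · -- SG' ⊆ S
          rintro x (h | h)
          exacts [hSG h, h.1]
        · -- hN'
          intro s hs hsn w hw hadj
          have hsSG : s ∉ SG := fun h => hsn (Or.inl h)
          have hsa : ¬ G.Adj s a := fun h => hsn (Or.inr ⟨hs, h⟩)
          have hwA : w ∈ A := hN s hs hsSG w hw hadj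
          refine ⟨hwA, ?_⟩
          intro hwa
          rw [hwa] at hadj
          exact hsa hadj
        · -- INV preserved
          intro hsc
          have hsub : ((A \ {a}) ∪ SG')ᶜ ⊆ (A ∪ SG)ᶜ ∪ {a} := by
            intro x hx
            by_cases hxa : x = a
            · exact Or.inr hxa
            · refine Or.inl ?_
              rintro (h | h)
              · exact hx (Or.inl ⟨h, hxa⟩)
              · exact hx (Or.inr (Or.inl h))
          have hsc' := sc_mono hsub hsc
          have ha_not : a ∉ (A ∪ SG)ᶜ := fun h => h (Or.inl haA)
          rcases sc_union_singleton ha_not hsc' hpc hqc with h | ⟨⟨x, hx, hxs, hpx⟩, ⟨y, hy, hsy, hyq⟩⟩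
          · exact hINV h
          · have hxpos : x ∈ V2 ∨ x ∈ S := by
              rcases hc.tri x with h1 | h2 | h3
              · exact absurd (haprop x hxs.symm h1) (fun hA => hx (Or.inl hA))
              exacts [Or.inl h2, Or.inr h3]
            have hypos : y ∈ V2 ∨ y ∈ S := by
              rcases hc.tri y with h1 | h2 | h3
              · exact absurd (haprop y hsy h1) (fun hA => hy (Or.inl hA))
              exacts [Or.inl h2, Or.inr h3]
            have hxV2F : x ∈ V2 → False := fun h2 => hc.noedge a haV1 x h2 hxs.symm
            have hyV2F : y ∈ V2 → False := fun h2 => hc.noedge a haV1 y h2 hsy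
            exact hINV (sc_trans hpx (sc_trans (zcomp hc hg hx hy hxpos hypos) hyq))
      by_cases hR2 : ∃ a ∈ A, (∀ y, G.Adj a y → y ∉ V2) ∧ (∀ y, G.Adj a y → y ∈ S → y ∈ SG) ∧
          (∀ w w', G.Adj a w → G.Adj a w' → w ∈ V1 → w ∉ A → w' ∈ V1 → w' ∉ A →
            SameComp G ((A ∪ SG)ᶜ) w w')
      · obtain ⟨a, haA, hc1, hc2, hc3⟩ := hR2
        have haV1 : a ∈ V1 := hA1 haA
        have haSG : a ∉ SG := fun h => hc.v1S a haV1 (hSG h)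
        refine ih (A \ {a}) SG ?_ (Set.diff_subset.trans hA1)
          (fun x hx => hAB x hx.1) (fun h => hpA h.1) (fun h => hqA h.1) hSG ?_ ?_
        · -- measure
          obtain ⟨K, hK⟩ : ∃ K, A.ncard = K + 1 := by
            have hpos : 0 < A.ncard := (Set.ncard_pos).mpr hAne
            exact ⟨A.ncard - 1, by omega⟩
          have hd : (A \ {a}).ncard = K := by
            have := Set.ncard_diff_singleton_of_mem haA
            omega
          have hmul : (n + 1) * A.ncard = (n + 1) * K + (n + 1) := by
            rw [hK, Nat.mul_succ]
          rw [hd]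
          have := hm
          rw [hmul] at this
          omega
        · -- hN'
          intro s hs hsn w hw hadj
          have hwA : w ∈ A := hN s hs hsn w hw hadj
          refine ⟨hwA, ?_⟩
          intro hwa
          subst hwa
          exact hsn (hc2 s hadj.symm hs)
        · -- INV
          intro hsc
          have hEq : (((A \ {a}) ∪ SG)ᶜ : Set (Fin n)) = (A ∪ SG)ᶜ ∪ {a} := by
            ext x
            simp only [Set.mem_compl_iff, Set.mem_union, Set.mem_diff,
              Set.mem_singleton_iff]
            constructor
            · intro h
              by_cases hxa : x = a
              · exact Or.inr hxa
              · exact Or.inl (fun hor => h (hor.imp (fun hx => ⟨hx, hxa⟩) id))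
            · rintro (h | h)
              · intro hor
                exact h (hor.imp (fun hx => hx.1) id)
              · subst h
                rintro (hx | hx)
                exacts [hx.2 rfl, haSG hx]
          rw [hEq] at hsc
          have ha_not : a ∉ (A ∪ SG)ᶜ := fun h => h (Or.inl haA)
          rcases sc_union_singleton ha_not hsc hpc hqc with h | ⟨⟨x, hx, hxs, hpx⟩, ⟨y, hy, hsy, hyq⟩⟩
          · exact hINV h
          · have hxV1 : x ∈ V1 ∧ x ∉ A := by
              rcases hc.tri x with h1 | h2 | h3
              · exact ⟨h1, fun hA => hx (Or.inl hA)⟩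
              · exact absurd h2 (hc1 x hxs.symm)
              · exact absurd (hc2 x hxs.symm h3) (fun h => hx (Or.inr h))
            have hyV1 : y ∈ V1 ∧ y ∉ A := by
              rcases hc.tri y with h1 | h2 | h3
              · exact ⟨h1, fun hA => hy (Or.inl hA)⟩
              · exact absurd h2 (hc1 y hsy)
              · exact absurd (hc2 y hsy h3) (fun h => hy (Or.inr h))
            have hxy := hc3 x y hxs.symm hsy hxV1.1 hxV1.2 hyV1.1 hyV1.2
            exact hINV (sc_trans hpx (sc_trans hxy hyq))
      · -- stable : build the cut
        push_neg at hR1 hR3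
        apply mkCutFalse hc hg LHS hAB hAne
        intro u hu
        rcases hu with huA | huSG
        · obtain ⟨w, hadjw, hwV1, hwA⟩ := hR3 u huA
          have hwc : w ∈ (A ∪ SG)ᶜ := v1_mem_compl hc hg hwV1 hwA
          have huV1 : u ∈ V1 := hA1 huA
          by_cases hC2 : ∀ y, G.Adj u y → y ∈ S → y ∈ SG
          · -- then cond1 holds automatically (no V2 neighbours), so cond3 must fail
            have hC1 : ∀ y, G.Adj u y → y ∉ V2 := fun y hy h2 => hc.noedge u huV1 y h2 hy
            have hnc3 : ¬ (∀ w w', G.Adj u w → G.Adj u w' → w ∈ V1 → w ∉ A → w' ∈ V1 → w' ∉ A →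
                SameComp G ((A ∪ SG)ᶜ) w w') := by
              intro hc3
              exact hR2 ⟨u, huA, hC1, hC2, hc3⟩
            push_neg at hnc3
            obtain ⟨x, y, hux, huy, hxV1, hxA, hyV1, hyA, hxy⟩ := hnc3
            exact ⟨x, y, v1_mem_compl hc hg hxV1 hxA, v1_mem_compl hc hg hyV1 hyA,
              hux, huy, hxy⟩
          · push_neg at hC2
            obtain ⟨y, huy, hyS, hySG⟩ := hC2
            have hyc : y ∈ (A ∪ SG)ᶜ := s_mem_compl hc hg hyS hySG
            refine ⟨w, y, hwc, hyc, hadjw, huy, ?_⟩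
            intro hsc
            exact hc.v1S y (conf_v1 hc hg hwV1 hwc hsc) hyS
        · obtain ⟨w, hwV1, hadjw, hwA⟩ := hR1 u huSG
          obtain ⟨_, b, hbV2, hbadj⟩ := hc.s_adj_both u (hSG huSG)
          have hwc : w ∈ (A ∪ SG)ᶜ := v1_mem_compl hc hg hwV1 hwA
          have hbc : b ∈ (A ∪ SG)ᶜ := v2_compl hc hg hbV2
          refine ⟨w, b, hwc, hbc, hadjw, hbadj, ?_⟩
          intro hsc
          exact hc.v1v2 b (conf_v1 hc hg hwV1 hwc hsc) hbV2

end ML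

end StmtAux

namespace StmtAux

variable {n : ℕ} {G : SimpleGraph (Fin n)} {S V1 V2 B : Set (Fin n)}

lemma nice_swap {Va Vb S' : Set (Fin n)} (h : Nice G Va Vb S') : Nice G Vb Va S' := by
  rintro ⟨i, j, hi, hj, hs⟩
  exact h ⟨j, i, hj, hi, sc_symm hs⟩

lemma comps_swap (h : ComponentsOf G S V1 V2) : ComponentsOf G S V2 V1 :=
  ⟨by rw [Set.union_comm]; exact h.1, h.2.1.symm, h.2.2.2.1, h.2.2.1,
    h.2.2.2.2.2.1, h.2.2.2.2.1,
    fun a ha b hb hs => h.2.2.2.2.2.2 b hb a ha (sc_symm hs)⟩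

lemma ctx_swap (hc : Ctx G S V1 V2 B) : Ctx G S V2 V1 B :=
  ⟨hc.hG, hc.hcut, comps_swap hc.hcomp, by rw [Set.union_comm]; exact hc.hB, hc.h2, hc.h1⟩

lemma oneSide (hc : Ctx G S V1 V2 B)
    (LHS : ∀ S' ∈ minSet G, S' ≠ S → Nice G V1 V2 S' → (B ∩ (S' \ S)).Nonempty) :
    ConnDom G (V1 ∪ S) (B ∩ V1) := by
  classical
  obtain ⟨b1, hb1B, hb1V⟩ := hc.h1
  refine ⟨fun x hx => Or.inl hx.2, ?_, ?_⟩
  · -- connectivity of B ∩ V1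
    by_contra hnc
    have hnee : Nonempty ↥(B ∩ V1) := (hc.h1).to_subtype
    have hpre : ¬ (G.induce (B ∩ V1)).Preconnected := fun h => hnc ((SimpleGraph.connected_iff _).mpr ⟨h, hnee⟩)
    rw [SimpleGraph.Preconnected] at hpre
    push_neg at hpre
    obtain ⟨u, v, hr⟩ := hpre
    apply ML1aux hc LHS (p := (u : Fin n)) (q := (v : Fin n)) u.2.2 v.2.2
      ((n + 1) * (V1 \ B).ncard + S.ncard) (V1 \ B) S le_rfl Set.diff_subset
      (fun x hx => hx.2) (fun h => h.2 u.2.1) (fun h => h.2 v.2.1) le_rfl.subset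
      (fun s hs hsn => absurd hs hsn)
    intro hsc
    have hcl : ∀ x ∈ (B ∩ V1), ∀ y ∈ ((V1 \ B) ∪ S)ᶜ, G.Adj x y → y ∈ B ∩ V1 := by
      intro x hx y hy hadj
      rcases hc.tri y with hy1 | hy2 | hy3
      · by_cases hyB : y ∈ B
        · exact ⟨hyB, hy1⟩
        · exact absurd (Or.inl ⟨hy1, hyB⟩) hy
      · exact absurd hadj (hc.noedge x hx.2 y hy2)
      · exact absurd (Or.inr hy3) hy
    have hr' := (sc_confine hcl hsc u.2).2
    obtain ⟨ha, hb, hrr⟩ := hr'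
    exact hr hrr
  · -- domination
    intro v hv hvB
    by_contra hno
    push_neg at hno
    rcases hv with hvV1 | hvS
    · -- v ∈ V1
      apply ML1aux hc LHS (p := v) (q := b1) hvV1 hb1V
        ((n + 1) * ({x | x ∈ V1 ∧ G.Adj v x} : Set (Fin n)).ncard + S.ncard)
        {x | x ∈ V1 ∧ G.Adj v x} S le_rfl (fun x hx => hx.1)
        (fun x hx hxB => hno x ⟨hxB, hx.1⟩ hx.2)
        (fun h => G.loopless.irrefl v h.2)
        (fun h => hno b1 ⟨hb1B, hb1V⟩ h.2)
        le_rfl.subset (fun s hs hsn => absurd hs hsn)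
      intro hsc
      have hcl : ∀ x ∈ ({v} : Set (Fin n)), ∀ y ∈ (({x | x ∈ V1 ∧ G.Adj v x} : Set (Fin n)) ∪ S)ᶜ,
          G.Adj x y → y ∈ ({v} : Set (Fin n)) := by
        intro x hx y hy hadj
        rw [Set.mem_singleton_iff] at hx; subst hx
        exfalso
        rcases hc.tri y with hy1 | hy2 | hy3
        · exact hy (Or.inl ⟨hy1, hadj⟩)
        · exact hc.noedge x hvV1 y hy2 hadj
        · exact hy (Or.inr hy3)
      have hb1v := (sc_confine hcl hsc (Set.mem_singleton v)).1
      rw [Set.mem_singleton_iff] at hb1v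
      exact hvB (hb1v ▸ (show b1 ∈ B ∩ V1 from ⟨hb1B, hb1V⟩))
    · -- v ∈ S
      have hABs : ∀ x ∈ ({x | x ∈ V1 ∧ G.Adj v x} : Set (Fin n)), x ∉ B :=
        fun x hx hxB => hno x ⟨hxB, hx.1⟩ hx.2
      by_cases hall : ∀ a ∈ ({x | x ∈ V1 ∧ G.Adj v x} : Set (Fin n)),
          ∃ w, w ∈ V1 ∧ w ∉ ({x | x ∈ V1 ∧ G.Adj v x} : Set (Fin n)) ∧ G.Adj a w
      · obtain ⟨⟨a0, ha0V, ha0adj⟩, _⟩ := hc.s_adj_both v hvS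
        apply ML2aux hc LHS hvS (A := {x | x ∈ V1 ∧ G.Adj v x}) (fun x hx => hx.1)
          (fun a ha => ha.2) ⟨a0, ha0V, ha0adj⟩ hABs hall
          ((S \ {v}).ncard) (S \ {v}) le_rfl Set.diff_subset (fun h => h.2 rfl)
        intro s hs hsn w hw hadj
        have hsv : s = v := by
          by_contra hnev; exact hsn ⟨hs, hnev⟩
        subst hsv
        exact ⟨hw, hadj⟩
      · push_neg at hall
        obtain ⟨a, haA, haprop⟩ := hall
        apply ML1aux hc LHS (p := b1) (q := a) hb1V haA.1
          ((n + 1) * (({x | x ∈ V1 ∧ G.Adj v x} : Set (Fin n)) \ {a}).ncard + S.ncard)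
          ({x | x ∈ V1 ∧ G.Adj v x} \ {a}) S le_rfl
          (fun x hx => hx.1.1) (fun x hx => hABs x hx.1)
          (fun h => hABs b1 h.1 hb1B) (fun h => h.2 rfl)
          le_rfl.subset (fun s hs hsn => absurd hs hsn)
        intro hsc
        have hcl : ∀ x ∈ ({a} : Set (Fin n)),
            ∀ y ∈ ((({x | x ∈ V1 ∧ G.Adj v x} : Set (Fin n)) \ {a}) ∪ S)ᶜ,
            G.Adj x y → y ∈ ({a} : Set (Fin n)) := by
          intro x hx y hy hadj
          rw [Set.mem_singleton_iff] at hx; subst hx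
          exfalso
          rcases hc.tri y with hy1 | hy2 | hy3
          · by_cases hyA : y ∈ ({x | x ∈ V1 ∧ G.Adj v x} : Set (Fin n))
            · by_cases hya : y = x
              · subst hya; exact G.loopless.irrefl y hadj
              · exact hy (Or.inl ⟨hyA, hya⟩)
            · exact haprop y hy1 hyA hadj
          · exact hc.noedge x haA.1 y hy2 hadj
          · exact hy (Or.inr hy3)
        have hb1a := (sc_confine hcl (sc_symm hsc) (Set.mem_singleton a)).1
        rw [Set.mem_singleton_iff] at hb1a
        exact hABs a haA (hb1a ▸ hb1B)

lemma backward (hc : Ctx G S V1 V2 B)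
    (c1 : ConnDom G (V1 ∪ S) (B ∩ V1)) (c2 : ConnDom G (V2 ∪ S) (B ∩ V2)) :
    ∀ S' ∈ minSet G, S' ≠ S → Nice G V1 V2 S' → (B ∩ (S' \ S)).Nonempty := by
  intro S' hS' hne hnice
  by_contra hcon
  rw [Set.not_nonempty_iff_eq_empty] at hcon
  have hBS' : ∀ x ∈ B, x ∉ S' := by
    intro x hxB hxS'
    have hxS : x ∉ S := hc.BS x hxB
    have hmem : x ∈ B ∩ (S' \ S) := ⟨hxB, hxS', hxS⟩
    rw [hcon] at hmem; exact hmem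
  obtain ⟨b1, hb1B, hb1V⟩ := hc.h1
  obtain ⟨b2, hb2B, hb2V⟩ := hc.h2
  rcases hS' with hS'e | ⟨k, hk2, hmin'⟩
  · subst hS'e
    apply hnice
    refine ⟨b1, b2, ⟨hb1V, Set.notMem_empty b1⟩, ⟨hb2V, Set.notMem_empty b2⟩, ?_⟩
    rw [show ((∅ : Set (Fin n))ᶜ) = Set.univ from Set.compl_empty]
    have hr : G.Reachable b1 b2 := hc.hG.preconnected b1 b2
    exact ⟨trivial, trivial,
      hr.map (⟨fun v => ⟨v, trivial⟩, fun hab => hab⟩ : G →g G.induce (Set.univ : Set (Fin n)))⟩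
  · have hB1c : B ∩ V1 ⊆ S'ᶜ := fun x hx => hBS' x hx.1
    have hB2c : B ∩ V2 ⊆ S'ᶜ := fun x hx => hBS' x hx.1
    have hscB1 : ∀ x ∈ B ∩ V1, SameComp G S'ᶜ x b1 := by
      intro x hx
      have hrr := (c1.2.1).preconnected ⟨x, hx⟩ ⟨b1, ⟨hb1B, hb1V⟩⟩
      exact sc_mono hB1c ⟨hx, ⟨hb1B, hb1V⟩, hrr⟩
    have hscB2 : ∀ x ∈ B ∩ V2, SameComp G S'ᶜ x b2 := by
      intro x hx
      have hrr := (c2.2.1).preconnected ⟨x, hx⟩ ⟨b2, ⟨hb2B, hb2V⟩⟩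
      exact sc_mono hB2c ⟨hx, ⟨hb2B, hb2V⟩, hrr⟩
    have hV1side : ∀ x, x ∈ V1 → x ∉ S' → SameComp G S'ᶜ x b1 := by
      intro x hx hxS'
      by_cases hxB : x ∈ B
      · exact hscB1 x ⟨hxB, hx⟩
      · obtain ⟨a, haB1, hadj⟩ := c1.2.2 x (Or.inl hx) (fun h => hxB h.1)
        exact sc_trans (sc_of_adj hxS' (hB1c haB1) hadj) (hscB1 a haB1)
    have hV2side : ∀ x, x ∈ V2 → x ∉ S' → SameComp G S'ᶜ x b2 := by
      intro x hx hxS'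
      by_cases hxB : x ∈ B
      · exact hscB2 x ⟨hxB, hx⟩
      · obtain ⟨a, haB2, hadj⟩ := c2.2.2 x (Or.inl hx) (fun h => hxB h.1)
        exact sc_trans (sc_of_adj hxS' (hB2c haB2) hadj) (hscB2 a haB2)
    have hSsub : S ⊆ S' := by
      intro s hs
      by_contra hsn
      obtain ⟨a, haB1, hadj1⟩ := c1.2.2 s (Or.inr hs) (fun h => hc.v1S s h.2 hs)
      obtain ⟨a', haB2, hadj2⟩ := c2.2.2 s (Or.inr hs) (fun h => hc.v2S s h.2 hs)
      have hsc1 : SameComp G S'ᶜ s b1 :=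
        sc_trans (sc_of_adj hsn (hB1c haB1) hadj1) (hscB1 a haB1)
      have hsc2 : SameComp G S'ᶜ s b2 :=
        sc_trans (sc_of_adj hsn (hB2c haB2) hadj2) (hscB2 a' haB2)
      exact hnice ⟨b1, b2, ⟨hb1V, hBS' b1 hb1B⟩, ⟨hb2V, hBS' b2 hb2B⟩,
        sc_trans (sc_symm hsc1) hsc2⟩
    obtain ⟨w, hwS', hwS⟩ := Set.exists_of_ssubset (hSsub.ssubset_of_ne (Ne.symm hne))
    have hlt := hmin'.2.2.2 w hwS'
    have hnall : ¬ ∀ x y, x ∈ S'ᶜ → y ∈ S'ᶜ → G.Adj w x → G.Adj w y → SameComp G S'ᶜ x y := by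
      intro hall
      exact absurd hlt (not_lt.mpr (numComp_le (fun h => h hwS') hall))
    push_neg at hnall
    obtain ⟨x, y, hx, hy, hwx, hwy, hxy⟩ := hnall
    have hxS : x ∉ S := fun h => hx (hSsub h)
    have hyS : y ∉ S := fun h => hy (hSsub h)
    rcases hc.tri w with hwV1 | hwV2 | hwS''
    · have hx1 : x ∈ V1 := by
        rcases hc.tri x with h | h | h
        · exact h
        · exact absurd hwx (hc.noedge w hwV1 x h)
        · exact absurd h hxS
      have hy1 : y ∈ V1 := by
        rcases hc.tri y with h | h | h
        · exact h
        · exact absurd hwy (hc.noedge w hwV1 y h)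
        · exact absurd h hyS
      exact hxy (sc_trans (hV1side x hx1 hx) (sc_symm (hV1side y hy1 hy)))
    · have hx2 : x ∈ V2 := by
        rcases hc.tri x with h | h | h
        · exact absurd hwx.symm (hc.noedge x h w hwV2)
        · exact h
        · exact absurd h hxS
      have hy2 : y ∈ V2 := by
        rcases hc.tri y with h | h | h
        · exact absurd hwy.symm (hc.noedge y h w hwV2)
        · exact h
        · exact absurd h hyS
      exact hxy (sc_trans (hV2side x hx2 hx) (sc_symm (hV2side y hy2 hy)))
    · exact hwS hwS''

end StmtAux

/-- transversals of the nice minimal cuts. -/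
theorem stmt2 {n : ℕ} (G : SimpleGraph (Fin n)) (hG : G.Connected)
    (S V1 V2 : Set (Fin n)) (hcut : IsMinKCut G S 2) (hcomp : ComponentsOf G S V1 V2)
    (B : Set (Fin n)) (hB : B ⊆ V1 ∪ V2)
    (h1 : (B ∩ V1).Nonempty) (h2 : (B ∩ V2).Nonempty) :
    (∀ S' ∈ minSet G, S' ≠ S → Nice G V1 V2 S' → (B ∩ (S' \ S)).Nonempty) ↔
      (ConnDom G (V1 ∪ S) (B ∩ V1) ∧ ConnDom G (V2 ∪ S) (B ∩ V2)) := by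
  have hc : StmtAux.Ctx G S V1 V2 B := ⟨hG, hcut, hcomp, hB, h1, h2⟩
  constructor
  · intro LHS
    refine ⟨StmtAux.oneSide hc LHS, ?_⟩
    exact StmtAux.oneSide (StmtAux.ctx_swap hc)
      (fun S' hm hn hni => LHS S' hm hn (StmtAux.nice_swap hni))
  · rintro ⟨c1, c2⟩
    exact StmtAux.backward hc c1 c2
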